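/- Let V be a real inner product space with orthogonal almost complex structure J and Q a symmetric hybrid bilinear form. Then φ(Q) has the curvature tensor symmetries: φ(Q)(x,y,z,u) = −φ(Q)(y,x,z,u), φ(Q)(x,y,z,u) = −φ(Q)(x,y,u,z), and φ(Q)(x,y,z,u) = φ(Q)(z,u,x,y) for all x,y,z,u ∈ V. -/

import Mathlib

noncomputable def phi {V : Type*} [NormedAddCommGroup V] [InnerProductSpace ℝ V]
    (J : V →ₗ[ℝ] V) (Q : LinearMap.BilinForm ℝ V) (x y z u : V) : ℝ :=
  (inner ℝ x u : ℝ) * Q y z - (inner ℝ x z : ℝ) * Q y u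
  + (inner ℝ y z : ℝ) * Q x u - (inner ℝ y u : ℝ) * Q x z
  + (inner ℝ x (J u) : ℝ) * Q y (J z) - (inner ℝ x (J z) : ℝ) * Q y (J u)
  - 2 * (inner ℝ x (J y) : ℝ) * Q z (J u)
  + (inner ℝ y (J z) : ℝ) * Q x (J u) - (inner ℝ y (J u) : ℝ) * Q x (J z)
  - 2 * (inner ℝ z (J u) : ℝ) * Q x (J y)

theorem stmt4 {V : Type*} [NormedAddCommGroup V] [InnerProductSpace ℝ V]
    (J : V →ₗ[ℝ] V) (hJ2 : ∀ x, J (J x) = -x)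
    (hJorth : ∀ x y : V, inner ℝ (J x) (J y) = (inner ℝ x y : ℝ))
    (Q : LinearMap.BilinForm ℝ V)
    (hsym : ∀ x y, Q x y = Q y x) (hhyb : ∀ x y, Q (J x) (J y) = Q x y) :
    ∀ x y z u : V, phi J Q x y z u = -phi J Q y x z u ∧
      phi J Q x y z u = -phi J Q x y u z ∧
      phi J Q x y z u = phi J Q z u x y := by
  have l1 : ∀ a b : V, (inner ℝ (J a) b : ℝ) = -(inner ℝ a (J b) : ℝ) := by
    intro a b
    have := hJorth a (J b)
    rw [hJ2, inner_neg_right] at this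
    linarith
  have l2 : ∀ a b : V, Q (J a) b = -(Q a (J b)) := by
    intro a b
    have := hhyb a (J b)
    rw [hJ2, map_neg] at this
    linarith
  have l3 : ∀ a b : V, (inner ℝ a (J b) : ℝ) = -(inner ℝ b (J a) : ℝ) := by
    intro a b; rw [real_inner_comm, l1]
  have l4 : ∀ a b : V, Q a (J b) = -(Q b (J a)) := by
    intro a b; rw [hsym, l2]
  intro x y z u
  refine ⟨?_, ?_, ?_⟩
  · simp only [phi, l1, l2, hsym, real_inner_comm, neg_neg]
    linear_combination (-2*(Q z) (J u))*(l3 x y) + (-2*(inner ℝ z (J u):ℝ))*(l4 x y)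
  · simp only [phi, l1, l2, hsym, real_inner_comm, neg_neg]
    linear_combination (-2*(inner ℝ x (J y):ℝ))*(l4 z u) + (-2*(Q x) (J y))*(l3 z u)
  · simp only [phi, l1, l2, hsym, real_inner_comm, neg_neg]
    linear_combination ((Q y) (J z))*(l3 x u) - ((inner ℝ u (J x):ℝ))*(l4 y z)
      - ((Q y) (J u))*(l3 x z) + ((inner ℝ z (J x):ℝ))*(l4 y u)
      + ((Q x) (J u))*(l3 y z) - ((inner ℝ z (J y):ℝ))*(l4 x u)
      - ((Q x) (J z))*(l3 y u) + ((inner ℝ u (J y):ℝ))*(l4 x z)
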